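/- Let $a, b, c$ be nonzero integers with $\gcd(a,b,c) = 1$ and $c > 0$. Let $V \geq 1$ and $\alpha < \beta$ be real numbers. Let $\mathcal{V}$ be the number of triples $(u,v,w)$ of nonzero integers with $\gcd(u,v,w) = 1$, $V \leq v \leq 2V$, $au + bv + cw = 0$, and $\alpha \leq u/v \leq \beta$. Then $\mathcal{V} \leq C\left(\tau(c) + (\beta - \alpha) V^2 \frac{\sigma(c)}{c^2}\right)$ for an absolute constant $C > 0$. -/

import Mathlib

lemma floor_aux {x y δ : ℝ} (hδ : 0 < δ) (h : ⌊x/δ⌋ = ⌊y/δ⌋) : |x - y| < δ := by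
  have h1 := Int.floor_le (x/δ)
  have h2 := Int.lt_floor_add_one (x/δ)
  have h3 := Int.floor_le (y/δ)
  have h4 := Int.lt_floor_add_one (y/δ)
  rw [h] at h1 h2
  have hx : x = x/δ * δ := (div_mul_cancel₀ x hδ.ne').symm
  have hy : y = y/δ * δ := (div_mul_cancel₀ y hδ.ne').symm
  rw [abs_sub_lt_iff]
  constructor <;> nlinarith

lemma primitive_aux {u₁ v₁ u₂ v₂ : ℤ} (hg : Int.gcd u₁ v₁ = Int.gcd u₂ v₂)
    (hv₁ : 0 < v₁) (hv₂ : 0 < v₂) (h : u₁ * v₂ = u₂ * v₁) : u₁ = u₂ ∧ v₁ = v₂ := by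
  have hdpos : 0 < Int.gcd u₁ v₁ := Int.gcd_pos_iff.mpr (Or.inr hv₁.ne')
  set d : ℤ := (Int.gcd u₁ v₁ : ℤ) with hd
  have hdZ : (0:ℤ) < d := by rw [hd]; exact_mod_cast hdpos
  have hdne : d ≠ 0 := hdZ.ne'
  obtain ⟨a₁, ha₁⟩ : d ∣ u₁ := Int.gcd_dvd_left _ _
  obtain ⟨b₁, hb₁⟩ : d ∣ v₁ := Int.gcd_dvd_right _ _
  obtain ⟨a₂, ha₂⟩ : d ∣ u₂ := by rw [hd, hg]; exact Int.gcd_dvd_left _ _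
  obtain ⟨b₂, hb₂⟩ : d ∣ v₂ := by rw [hd, hg]; exact Int.gcd_dvd_right _ _
  have hco1 : Int.gcd a₁ b₁ = 1 := by
    have h5 := Int.gcd_div_gcd_div_gcd hdpos
    rw [← hd, ha₁, hb₁, Int.mul_ediv_cancel_left _ hdne, Int.mul_ediv_cancel_left _ hdne] at h5
    exact h5
  have hco2 : Int.gcd a₂ b₂ = 1 := by
    have hdpos2 : 0 < Int.gcd u₂ v₂ := hg ▸ hdpos
    have h5 := Int.gcd_div_gcd_div_gcd hdpos2
    rw [← hg, ← hd, ha₂, hb₂, Int.mul_ediv_cancel_left _ hdne,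
      Int.mul_ediv_cancel_left _ hdne] at h5
    exact h5
  have key : a₁ * b₂ = a₂ * b₁ := by
    have h' : d * d * (a₁ * b₂) = d * d * (a₂ * b₁) := by
      rw [ha₁, hb₁, ha₂, hb₂] at h; ring_nf at h ⊢; linarith
    exact mul_left_cancel₀ (mul_ne_zero hdne hdne) h'
  have hb₁pos : 0 < b₁ := by
    rcases lt_trichotomy b₁ 0 with h'|h'|h'
    · nlinarith
    · simp [h'] at hb₁; omega
    · exact h'
  have hb₂pos : 0 < b₂ := by
    rcases lt_trichotomy b₂ 0 with h'|h'|h'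
    · nlinarith
    · simp [h'] at hb₂; omega
    · exact h'
  have h12 : b₁ ∣ b₂ := by
    have : b₁ ∣ a₁ * b₂ := ⟨a₂, by linarith⟩
    exact Int.dvd_of_dvd_mul_right_of_gcd_one this (by rwa [Int.gcd_comm])
  have h21 : b₂ ∣ b₁ := by
    have : b₂ ∣ a₂ * b₁ := ⟨a₁, by linarith⟩
    exact Int.dvd_of_dvd_mul_right_of_gcd_one this (by rwa [Int.gcd_comm])
  have hb : b₁ = b₂ := Int.dvd_antisymm hb₁pos.le hb₂pos.le h12 h21
  have hv : v₁ = v₂ := by rw [hb₁, hb₂, hb]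
  refine ⟨?_, hv⟩
  have : u₁ * v₂ = u₂ * v₂ := by rw [h, hv]
  exact mul_right_cancel₀ hv₂.ne' this

lemma cop_dvd {a b c' det : ℤ} (h1 : c' ∣ a * det) (h2 : c' ∣ b * det)
    (hco : Int.gcd ((Int.gcd a b : ℤ)) c' = 1) : c' ∣ det := by
  have h3 : c' ∣ ((Int.gcd (a * det) (b * det) : ℕ) : ℤ) := Int.dvd_coe_gcd h1 h2
  rw [Int.gcd_mul_right] at h3
  push_cast at h3
  have h5 : c' ∣ (|det| : ℤ) :=
    Int.dvd_of_dvd_mul_right_of_gcd_one h3 (by rwa [Int.gcd_comm])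
  exact (dvd_abs _ _).mp h5

set_option maxHeartbeats 1000000 in
theorem iwaniec_mozzochi_lemma :
    ∃ C : ℝ, 0 < C ∧
      ∀ (a b c : ℤ), a ≠ 0 → b ≠ 0 → 0 < c → Int.gcd (Int.gcd a b) c = 1 →
      ∀ (V α β : ℝ), 1 ≤ V → α < β →
        let S : Set (ℤ × ℤ × ℤ) :=
          {p | p.1 ≠ 0 ∧ p.2.1 ≠ 0 ∧ p.2.2 ≠ 0 ∧
            Int.gcd (Int.gcd p.1 p.2.1) p.2.2 = 1 ∧
            V ≤ (p.2.1 : ℝ) ∧ (p.2.1 : ℝ) ≤ 2 * V ∧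
            a * p.1 + b * p.2.1 + c * p.2.2 = 0 ∧
            α ≤ (p.1 : ℝ) / (p.2.1 : ℝ) ∧ (p.1 : ℝ) / (p.2.1 : ℝ) ≤ β}
        S.Finite ∧
          (S.ncard : ℝ) ≤ C * ((c.toNat.divisors.card : ℝ) +
            (β - α) * V ^ 2 * ((∑ d ∈ c.toNat.divisors, d : ℕ) : ℝ) / (c : ℝ) ^ 2) := by
  refine ⟨4, by norm_num, ?_⟩
  intro a b c ha hb hc hco V α β hV hαβ S
  have hcR : (0:ℝ) < (c:ℝ) := by exact_mod_cast hc
  have hV0 : (0:ℝ) < V := lt_of_lt_of_le one_pos hV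
  set n := c.toNat with hn
  have hnc : ((n:ℤ)) = c := Int.toNat_of_nonneg hc.le
  have hn0 : n ≠ 0 := by
    intro h0
    rw [hn, Int.toNat_eq_zero] at h0
    omega
  set δ : ℕ → ℝ := fun d => (c:ℝ) * d / (4 * V^2) with hδ
  set f : ℤ × ℤ × ℤ → ℕ × ℤ :=
    fun p => (Int.gcd p.1 p.2.1, ⌊(((p.1:ℝ)/((p.2.1:ℝ))) - α) / δ (Int.gcd p.1 p.2.1)⌋)
    with hf
  classical
  set B : Finset (ℕ × ℤ) := n.divisors.biUnion
    (fun d => ({d} : Finset ℕ) ×ˢ Finset.Icc (0:ℤ) ⌊(β - α)/ δ d⌋) with hB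
  -- basic facts about members of S
  have hmem : ∀ p : ℤ × ℤ × ℤ, p ∈ S →
      0 < p.2.1 ∧ 0 < Int.gcd p.1 p.2.1 ∧ ((Int.gcd p.1 p.2.1 : ℤ)) ∣ c ∧
      α ≤ (p.1:ℝ)/(p.2.1:ℝ) ∧ (p.1:ℝ)/(p.2.1:ℝ) ≤ β ∧ (p.2.1:ℝ) ≤ 2*V ∧
      c ∣ a * p.1 + b * p.2.1 := by
    rintro ⟨u, v, w⟩ ⟨hu0, hv0, hw0, hg, hv1, hv2, heq, hr1, hr2⟩
    have hvpos : 0 < v := by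
      have : (0:ℝ) < (v:ℝ) := lt_of_lt_of_le hV0 hv1
      exact_mod_cast this
    have hgpos : 0 < Int.gcd u v := Int.gcd_pos_iff.mpr (Or.inl hu0)
    have h1 : ((Int.gcd u v : ℤ)) ∣ a * u + b * v :=
      dvd_add ((Int.gcd_dvd_left _ _).mul_left a) ((Int.gcd_dvd_right _ _).mul_left b)
    have h2 : a * u + b * v = -(c * w) := by linarith
    have h3 : ((Int.gcd u v : ℤ)) ∣ c * w := dvd_neg.mp (h2 ▸ h1)
    have hdc : ((Int.gcd u v : ℤ)) ∣ c :=
      Int.dvd_of_dvd_mul_left_of_gcd_one h3 hg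
    exact ⟨hvpos, hgpos, hdc, hr1, hr2, hv2, ⟨-w, by linarith⟩⟩
  -- injectivity of f on S
  have hinj : Set.InjOn f S := by
    rintro p hp q hq hfpq
    obtain ⟨hvp, hgp, hdp, hr1p, hr2p, hv2p, hcongp⟩ := hmem p hp
    obtain ⟨hvq, hgq, hdq, hr1q, hr2q, hv2q, hcongq⟩ := hmem q hq
    have hgeq : Int.gcd p.1 p.2.1 = Int.gcd q.1 q.2.1 := congrArg Prod.fst hfpq
    set d : ℕ := Int.gcd p.1 p.2.1 with hdd
    have hdZ : (0:ℤ) < (d:ℤ) := by exact_mod_cast hgp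
    have hdR : (0:ℝ) < (d:ℝ) := by exact_mod_cast hgp
    have hδpos : 0 < δ d := by
      rw [hδ]
      positivity
    have hfloor : ⌊(((p.1:ℝ)/(p.2.1:ℝ)) - α)/δ d⌋ = ⌊(((q.1:ℝ)/(q.2.1:ℝ)) - α)/δ d⌋ := by
      have h6 := congrArg Prod.snd hfpq
      simp only [hf] at h6
      rwa [← hgeq] at h6
    have h5 := floor_aux hδpos hfloor
    have hlt : |((p.1:ℝ)/(p.2.1:ℝ)) - ((q.1:ℝ)/(q.2.1:ℝ))| < δ d := by
      have e : ((p.1:ℝ)/(p.2.1:ℝ)) - ((q.1:ℝ)/(q.2.1:ℝ)) =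
          (((p.1:ℝ)/(p.2.1:ℝ)) - α) - ((((q.1:ℝ)/(q.2.1:ℝ))) - α) := by ring
      rw [e]; exact h5
    have hvpR : (0:ℝ) < (p.2.1:ℝ) := by exact_mod_cast hvp
    have hvqR : (0:ℝ) < (q.2.1:ℝ) := by exact_mod_cast hvq
    rcases eq_or_ne ((p.1:ℝ)/(p.2.1:ℝ)) ((q.1:ℝ)/(q.2.1:ℝ)) with hr | hr
    · -- equal ratios ⇒ equal points
      have hcross : p.1 * q.2.1 = q.1 * p.2.1 := by
        have := (div_eq_div_iff hvpR.ne' hvqR.ne').mp hr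
        exact_mod_cast this
      obtain ⟨h1, h2⟩ := primitive_aux hgeq hvp hvq hcross
      obtain ⟨-, -, -, -, -, -, heqp, -, -⟩ := hp
      obtain ⟨-, -, -, -, -, -, heqq, -, -⟩ := hq
      have hw : p.2.2 = q.2.2 := by
        have h7 : c * p.2.2 = c * q.2.2 := by rw [h1, h2] at heqp; linarith
        exact mul_left_cancel₀ hc.ne' h7
      exact Prod.ext h1 (Prod.ext h2 hw)
    · exfalso
      obtain ⟨u', hu'⟩ : ((d:ℤ)) ∣ p.1 := Int.gcd_dvd_left _ _
      obtain ⟨v', hv'⟩ : ((d:ℤ)) ∣ p.2.1 := Int.gcd_dvd_right _ _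
      obtain ⟨u'', hu''⟩ : ((d:ℤ)) ∣ q.1 := by rw [hgeq]; exact Int.gcd_dvd_left _ _
      obtain ⟨v'', hv''⟩ : ((d:ℤ)) ∣ q.2.1 := by rw [hgeq]; exact Int.gcd_dvd_right _ _
      obtain ⟨c', hc'⟩ : ((d:ℤ)) ∣ c := hdp
      have hc'pos : 0 < c' := by nlinarith
      have hcongp' : c' ∣ a * u' + b * v' := by
        obtain ⟨k, hk⟩ := hcongp
        refine ⟨k, mul_left_cancel₀ hdZ.ne' ?_⟩
        rw [hu', hv', hc'] at hk
        linarith [hk]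
      have hcongq' : c' ∣ a * u'' + b * v'' := by
        obtain ⟨k, hk⟩ := hcongq
        refine ⟨k, mul_left_cancel₀ hdZ.ne' ?_⟩
        rw [hu'', hv'', hc'] at hk
        linarith [hk]
      set Δ : ℤ := u' * v'' - u'' * v' with hΔ
      have hadvd : c' ∣ a * Δ := by
        have e : a * Δ = (a * u' + b * v') * v'' - (a * u'' + b * v'') * v' := by
          rw [hΔ]; ring
        rw [e]; exact dvd_sub (hcongp'.mul_right _) (hcongq'.mul_right _)
      have hbdvd : c' ∣ b * Δ := by
        have e : b * Δ = (a * u'' + b * v'') * u' - (a * u' + b * v') * u'' := by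
          rw [hΔ]; ring
        rw [e]; exact dvd_sub (hcongq'.mul_right _) (hcongp'.mul_right _)
      have hcop' : Int.gcd ((Int.gcd a b : ℤ)) c' = 1 := by
        have h8 : IsCoprime ((Int.gcd a b : ℤ)) c := Int.isCoprime_iff_gcd_eq_one.mpr hco
        have h9 : c' ∣ c := ⟨(d:ℤ), by linarith [hc']⟩
        exact Int.isCoprime_iff_gcd_eq_one.mp (h8.of_isCoprime_of_dvd_right h9)
      have hΔdvd : c' ∣ Δ := cop_dvd hadvd hbdvd hcop'
      have hΔne : Δ ≠ 0 := by
        intro h0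
        apply hr
        rw [div_eq_div_iff hvpR.ne' hvqR.ne']
        have hcross : p.1 * q.2.1 = q.1 * p.2.1 := by
          rw [hu', hv', hu'', hv'']
          rw [hΔ] at h0
          linear_combination ((d:ℤ))^2 * h0
        exact_mod_cast hcross
      have hΔge : c' ≤ |Δ| := Int.le_of_dvd (abs_pos.mpr hΔne) ((dvd_abs _ _).mpr hΔdvd)
      have hvvpos : (0:ℝ) < (p.2.1:ℝ) * (q.2.1:ℝ) := mul_pos hvpR hvqR
      set N : ℤ := p.1 * q.2.1 - q.1 * p.2.1 with hN
      have hdet : N = (d:ℤ)^2 * Δ := by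
        rw [hN, hu', hv', hu'', hv'', hΔ]; ring
      have hdetge : (d:ℤ)^2 * c' ≤ |N| := by
        rw [hdet, abs_mul, abs_of_nonneg (pow_nonneg hdZ.le 2)]
        exact mul_le_mul_of_nonneg_left hΔge (pow_nonneg hdZ.le 2)
      have hNR : ((d:ℝ))^2 * (c':ℝ) ≤ |(N:ℝ)| := by
        rw [← Int.cast_abs]
        exact_mod_cast hdetge
      have hreal : ((p.1:ℝ)/(p.2.1:ℝ)) - ((q.1:ℝ)/(q.2.1:ℝ)) =
          ((N:ℝ)) / ((p.2.1:ℝ) * (q.2.1:ℝ)) := by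
        rw [hN]
        push_cast
        field_simp
      have hgap : δ d ≤ |((p.1:ℝ)/(p.2.1:ℝ)) - ((q.1:ℝ)/(q.2.1:ℝ))| := by
        rw [hreal, abs_div, abs_of_pos hvvpos, le_div_iff₀ hvvpos]
        simp only [hδ]
        rw [div_mul_eq_mul_div, div_le_iff₀ (by positivity : (0:ℝ) < 4*V^2)]
        have hvv : (p.2.1:ℝ) * (q.2.1:ℝ) ≤ 4 * V^2 := by nlinarith
        have hcd : (c:ℝ) * (d:ℝ) = ((d:ℝ))^2 * (c':ℝ) := by
          have h10 : (c:ℝ) = (d:ℝ) * (c':ℝ) := by exact_mod_cast hc'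
          rw [h10]; ring
        rw [hcd]
        have e1 : ((d:ℝ))^2 * (c':ℝ) * ((p.2.1:ℝ) * (q.2.1:ℝ)) ≤ |(N:ℝ)| * ((p.2.1:ℝ) * (q.2.1:ℝ)) :=
          mul_le_mul_of_nonneg_right hNR hvvpos.le
        have e2 : |(N:ℝ)| * ((p.2.1:ℝ) * (q.2.1:ℝ)) ≤ |(N:ℝ)| * (4 * V^2) :=
          mul_le_mul_of_nonneg_left hvv (abs_nonneg _)
        linarith
      exact absurd hlt (not_lt.mpr hgap)
  -- image is inside B
  have himg : f '' S ⊆ ↑B := by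
    rintro x ⟨p, hp, rfl⟩
    obtain ⟨hvp, hgp, hdp, hr1, hr2, hv2, -⟩ := hmem p hp
    have hdmem : Int.gcd p.1 p.2.1 ∈ n.divisors := by
      refine Nat.mem_divisors.mpr ⟨?_, hn0⟩
      have : ((Int.gcd p.1 p.2.1 : ℤ)) ∣ (n:ℤ) := by rw [hnc]; exact hdp
      exact_mod_cast this
    have hδpos : 0 < δ (Int.gcd p.1 p.2.1) := by
      rw [hδ]
      have : (0:ℝ) < ((Int.gcd p.1 p.2.1 : ℕ):ℝ) := by exact_mod_cast hgp
      positivity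
    simp only [Finset.coe_biUnion, Set.mem_iUnion, Finset.mem_coe, hB]
    refine ⟨Int.gcd p.1 p.2.1, hdmem, ?_⟩
    rw [Finset.mem_product]
    constructor
    · simp [hf]
    · simp only [hf, Finset.mem_Icc]
      constructor
      · exact Int.floor_nonneg.mpr (div_nonneg (by linarith) hδpos.le)
      · exact Int.floor_le_floor ((div_le_div_iff_of_pos_right hδpos).mpr (by linarith))
  -- finiteness
  have hfinimg : (f '' S).Finite := Set.Finite.subset B.finite_toSet himg
  have hSfin : S.Finite := Set.Finite.of_finite_image hfinimg hinj
  refine ⟨hSfin, ?_⟩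
  -- cardinality chain
  have hcard1 : (S.ncard : ℝ) ≤ (B.card : ℝ) := by
    have h1 : S.ncard = (f '' S).ncard := (Set.ncard_image_of_injOn hinj).symm
    have h2 : (f '' S).ncard ≤ (↑B : Set (ℕ × ℤ)).ncard :=
      Set.ncard_le_ncard himg B.finite_toSet
    rw [Set.ncard_coe_finset] at h2
    exact_mod_cast h1 ▸ h2
  have hcard2 : (B.card : ℝ) ≤ ∑ d ∈ n.divisors, ((β - α)/δ d + 1) := by
    have h1 : B.card ≤ ∑ d ∈ n.divisors,
        (({d} : Finset ℕ) ×ˢ Finset.Icc (0:ℤ) ⌊(β - α)/ δ d⌋).card := by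
      rw [hB]; exact Finset.card_biUnion_le
    have h2 : ((∑ d ∈ n.divisors,
        (({d} : Finset ℕ) ×ˢ Finset.Icc (0:ℤ) ⌊(β - α)/ δ d⌋).card : ℕ) : ℝ) ≤
        ∑ d ∈ n.divisors, ((β - α)/δ d + 1) := by
      push_cast
      apply Finset.sum_le_sum
      intro d hd
      have hd1 : 0 < d := Nat.pos_of_mem_divisors hd
      have hδpos : 0 < δ d := by
        rw [hδ]
        have : (0:ℝ) < (d:ℝ) := by exact_mod_cast hd1
        positivity
      have hx0 : (0:ℝ) ≤ (β - α)/δ d := div_nonneg (by linarith) hδpos.le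
      have hfl0 : (0:ℤ) ≤ ⌊(β - α)/δ d⌋ := Int.floor_nonneg.mpr hx0
      rw [Finset.card_product, Finset.card_singleton, one_mul, Int.card_Icc]
      have : ((⌊(β - α)/δ d⌋ + 1 - 0).toNat : ℝ) = ((⌊(β - α)/δ d⌋ : ℝ) + 1) := by
        rw [sub_zero]
        rw [show ((⌊(β - α)/δ d⌋ + 1).toNat : ℝ) = (((⌊(β - α)/δ d⌋ + 1).toNat : ℤ) : ℝ) by push_cast; ring]
        rw [Int.toNat_of_nonneg (by omega)]
        push_cast; ring
      rw [this]
      have := Int.floor_le ((β - α)/δ d)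
      linarith
    calc (B.card : ℝ) ≤ _ := by exact_mod_cast h1
      _ ≤ _ := h2
  have hσ : ∑ d ∈ n.divisors, (1:ℝ)/(d:ℝ) = ((∑ d ∈ n.divisors, d : ℕ):ℝ)/(n:ℝ) := by
    rw [← Nat.sum_div_divisors n (fun d => (1:ℝ)/(d:ℝ))]
    push_cast
    rw [Finset.sum_div]
    apply Finset.sum_congr rfl
    intro d hd
    obtain ⟨hdvd, -⟩ := Nat.mem_divisors.mp hd
    have hd0 : ((d:ℕ):ℝ) ≠ 0 := Nat.cast_ne_zero.mpr (Nat.pos_of_mem_divisors hd).ne'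
    have hnR : ((n:ℕ):ℝ) ≠ 0 := Nat.cast_ne_zero.mpr hn0
    rw [Nat.cast_div hdvd hd0, one_div_div]
  have hsum : ∑ d ∈ n.divisors, ((β - α)/δ d + 1) =
      (n.divisors.card : ℝ) + (β - α) * (4 * V^2) / (c:ℝ) * (((∑ d ∈ n.divisors, d : ℕ):ℝ)/(n:ℝ)) := by
    rw [Finset.sum_add_distrib, Finset.sum_const, nsmul_eq_mul, mul_one, ← hσ, Finset.mul_sum]
    rw [add_comm]
    congr 1
    apply Finset.sum_congr rfl
    intro d hd
    have hd1 : 0 < d := Nat.pos_of_mem_divisors hd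
    have hdR : (0:ℝ) < (d:ℝ) := by exact_mod_cast hd1
    rw [hδ]
    field_simp
  have hnR : ((n:ℕ):ℝ) = (c:ℝ) := by exact_mod_cast hnc
  have hfinal : (n.divisors.card : ℝ) + (β - α) * (4 * V^2) / (c:ℝ) * (((∑ d ∈ n.divisors, d : ℕ):ℝ)/(n:ℝ)) ≤
      4 * ((n.divisors.card : ℝ) + (β - α) * V ^ 2 * ((∑ d ∈ n.divisors, d : ℕ) : ℝ) / (c : ℝ) ^ 2) := by
    rw [hnR]
    have hτ : (0:ℝ) ≤ (n.divisors.card : ℝ) := Nat.cast_nonneg _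
    have he : (β - α) * (4 * V^2) / (c:ℝ) * (((∑ d ∈ n.divisors, d : ℕ):ℝ)/(c:ℝ)) =
        4 * ((β - α) * V ^ 2 * ((∑ d ∈ n.divisors, d : ℕ) : ℝ) / (c : ℝ) ^ 2) := by
      field_simp
    rw [he]
    linarith
  calc (S.ncard : ℝ) ≤ _ := hcard1
    _ ≤ _ := hcard2
    _ = _ := hsum
    _ ≤ _ := hfinal
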